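/- Let C be a uniform clutter with incidence matrix A and edge incidence vectors v_1,...,v_q. Then C has the max-flow min-cut property if and only if Q(A) is an integral polyhedron and ℕ{v_1,...,v_q} = ℝ₊{v_1,...,v_q} ∩ ℤ^n. -/

import Mathlib

open Finset

/-- A clutter on vertex set `Fin n`: a family of nonempty edges, none contained in another. -/
structure Clutter (n : ℕ) where
  edges : Finset (Finset (Fin n))
  nonempty_edges : ∀ e ∈ edges, e.Nonempty
  antichain : ∀ e ∈ edges, ∀ f ∈ edges, e ⊆ f → e = f

namespace Clutter

variable {n : ℕ}

/-- `C` is `d`-uniform: every edge has exactly `d` vertices. -/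
def Uniform (C : Clutter n) (d : ℕ) : Prop := ∀ e ∈ C.edges, e.card = d

/-- `S` is a vertex cover of `C`. -/
def IsCover (C : Clutter n) (S : Finset (Fin n)) : Prop := ∀ e ∈ C.edges, (e ∩ S).Nonempty

/-- `S` is a minimal vertex cover of `C`. -/
def IsMinCover (C : Clutter n) (S : Finset (Fin n)) : Prop :=
  C.IsCover S ∧ ∀ T ⊆ S, C.IsCover T → T = S

/-- The vertex covering number `α₀(C)`. -/
noncomputable def coverNumber (C : Clutter n) : ℕ :=
  sInf {k | ∃ S : Finset (Fin n), C.IsCover S ∧ S.card = k}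

/-- The edge independence (matching) number `β₁(C)`. -/
noncomputable def matchNumber (C : Clutter n) : ℕ :=
  sSup {k | ∃ M : Finset (Finset (Fin n)), M ⊆ C.edges ∧
    (∀ e ∈ M, ∀ f ∈ M, e ≠ f → Disjoint e f) ∧ M.card = k}

/-- `C` has a perfect matching: pairwise disjoint edges covering all vertices. -/
def HasPerfectMatching (C : Clutter n) : Prop :=
  ∃ M : Finset (Finset (Fin n)), M ⊆ C.edges ∧
    (∀ e ∈ M, ∀ f ∈ M, e ≠ f → Disjoint e f) ∧ (∀ i : Fin n, ∃ e ∈ M, i ∈ e)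

/-- The set covering polyhedron `Q(A) = {x : x ≥ 0, xA ≥ 1}`. -/
def QA (C : Clutter n) : Set (Fin n → ℝ) :=
  {x | (∀ i, 0 ≤ x i) ∧ ∀ e ∈ C.edges, 1 ≤ ∑ i ∈ e, x i}

/-- `Q(A)` is an integral polyhedron: all its vertices (extreme points) are integral. -/
def QAIntegral (C : Clutter n) : Prop :=
  ∀ x ∈ Set.extremePoints ℝ C.QA, ∀ i, ∃ z : ℤ, x i = (z : ℝ)

/-- Deletion of a vertex: remove `v` and all edges through it. -/
def delete (C : Clutter n) (v : Fin n) : Clutter n where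
  edges := C.edges.filter (fun e => v ∉ e)
  nonempty_edges := fun e he => C.nonempty_edges e (mem_filter.mp he).1
  antichain := fun e he f hf hef =>
    C.antichain e (mem_filter.mp he).1 f (mem_filter.mp hf).1 hef

/-- The edges of the minor of `C` obtained by deleting the vertices in `D`
(setting them to `0`) and contracting the vertices in `U` (setting them to `1`):
the minimal nonempty sets of the form `e \ U` with `e` an edge disjoint from `D`. -/
def minorEdges (C : Clutter n) (D U : Finset (Fin n)) : Finset (Finset (Fin n)) :=
  ((C.edges.filter (fun e => Disjoint e D)).image (fun e => e \ U)).filter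
    (fun e => e.Nonempty ∧
      ∀ f ∈ (C.edges.filter (fun e => Disjoint e D)).image (fun e => e \ U),
        f.Nonempty → f ⊆ e → f = e)

/-- The minor of `C` determined by deleting `D` and contracting `U`. -/
def minor (C : Clutter n) (D U : Finset (Fin n)) : Clutter n where
  edges := C.minorEdges D U
  nonempty_edges := fun e he => ((mem_filter.mp he).2).1
  antichain := fun e he f hf hef =>
    ((mem_filter.mp hf).2).2 e (mem_filter.mp he).1 ((mem_filter.mp he).2).1 hef

/-- The König property: `α₀(C) = β₁(C)`. -/
def HasKonig (C : Clutter n) : Prop := C.coverNumber = C.matchNumber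

/-- The packing property: every (proper) minor of `C` has the König property. -/
def PackingProperty (C : Clutter n) : Prop :=
  ∀ D U : Finset (Fin n), Disjoint D U →
    (∀ e ∈ C.edges, Disjoint e D → ¬ e ⊆ U) → (C.minor D U).HasKonig

/-- The max-flow min-cut property: for every nonnegative integral `α` the LP
`min{⟨α,x⟩ : x ≥ 0, xA ≥ 1}` and its dual `max{⟨y,1⟩ : y ≥ 0, Ay ≤ α}` both have
integral optimum solutions (expressed via a pair of integral feasible solutions
with equal objective values, which are then optimal by LP duality). -/
def HasMFMC (C : Clutter n) : Prop :=
  ∀ α : Fin n → ℕ,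
    ∃ (x : Fin n → ℕ) (y : Finset (Fin n) → ℕ),
      (∀ e ∈ C.edges, 1 ≤ ∑ i ∈ e, x i) ∧
      (∀ e, e ∉ C.edges → y e = 0) ∧
      (∀ i : Fin n, ∑ e ∈ C.edges.filter (fun e => i ∈ e), y e ≤ α i) ∧
      (∑ i, α i * x i = ∑ e ∈ C.edges, y e)

/-- The incidence matrix of `C`, with columns indexed by the edges. -/
def inc (C : Clutter n) : Matrix (Fin n) {e // e ∈ C.edges} ℤ :=
  Matrix.of fun i e => if i ∈ e.1 then 1 else 0

end Clutter

/-- `Δ_r(A) = 1`: the gcd of all nonzero `r × r` subdeterminants of `A` is `1`,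
i.e. every common divisor of them is a unit. -/
def DeltaOne {m m' : Type*} [Fintype m] [Fintype m'] (A : Matrix m m' ℤ) (r : ℕ) : Prop :=
  ∀ k : ℤ, (∀ (f : Fin r → m) (g : Fin r → m'), Function.Injective f → Function.Injective g →
    (A.submatrix f g).det ≠ 0 → k ∣ (A.submatrix f g).det) → IsUnit k



section Helpers
variable {n : ℕ} (C : Clutter n)

open Finset

lemma inner_swap (s : Finset (Finset (Fin n))) (w : Fin n → ℝ) (y : Finset (Fin n) → ℝ) :
    ∑ i, w i * ∑ e ∈ s.filter (fun e => i ∈ e), y e = ∑ e ∈ s, y e * ∑ i ∈ e, w i := by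
  classical
  simp_rw [Finset.sum_filter, Finset.mul_sum]
  rw [Finset.sum_comm]
  apply Finset.sum_congr rfl
  intro e _
  simp_rw [mul_ite, mul_zero]
  rw [← Finset.sum_filter]
  have : Finset.univ.filter (fun i => i ∈ e) = e := by ext i; simp
  rw [this]
  exact Finset.sum_congr rfl fun i _ => mul_comm _ _

lemma inner_swap' (w : Fin n → ℝ) (c : {e // e ∈ C.edges} → ℝ) :
    ∑ i, w i * ∑ e : {e // e ∈ C.edges}, c e * (if i ∈ e.1 then 1 else 0)
      = ∑ e : {e // e ∈ C.edges}, c e * ∑ i ∈ e.1, w i := by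
  classical
  simp_rw [mul_ite, mul_one, mul_zero, Finset.mul_sum]
  rw [Finset.sum_comm]
  apply Finset.sum_congr rfl
  intro e _
  simp_rw [mul_ite, mul_zero]
  rw [← Finset.sum_filter]
  have : Finset.univ.filter (fun i => i ∈ e.1) = e.1 := by
    ext i; simp
  rw [this]
  exact Finset.sum_congr rfl fun i _ => mul_comm _ _

lemma filter_sum_subtype (P : Finset (Fin n) → Prop) [DecidablePred P] (y : Finset (Fin n) → ℕ) :
    ∑ e ∈ C.edges.filter P, y e = ∑ e : {e // e ∈ C.edges}, (if P e.1 then y e.1 else 0) := by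
  classical
  rw [Finset.sum_filter, ← Finset.sum_coe_sort C.edges]

end Helpers

section Forward
variable {n : ℕ}

open Finset

lemma edges_empty_subtype_empty (C : Clutter n) (h : C.edges = ∅) :
    IsEmpty {e // e ∈ C.edges} :=
  ⟨fun e => Finset.notMem_empty e.1 (h ▸ e.2)⟩

theorem hilbert_of_mfmc {d : ℕ} (C : Clutter n) (hC : C.Uniform d) (hM : C.HasMFMC)
    (a : Fin n → ℤ)
    (h : ∃ lam : {e // e ∈ C.edges} → ℝ, (∀ e, 0 ≤ lam e) ∧
      ∀ i, (a i : ℝ) = ∑ e, lam e * (if i ∈ e.1 then 1 else 0)) :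
    ∃ c : {e // e ∈ C.edges} → ℕ, ∀ i, a i = ∑ e, (c e : ℤ) * (if i ∈ e.1 then 1 else 0) := by
  classical
  obtain ⟨lam, hlam, hrep⟩ := h
  by_cases hne : C.edges.Nonempty
  swap
  · rw [Finset.not_nonempty_iff_eq_empty] at hne
    have := edges_empty_subtype_empty C hne
    refine ⟨fun _ => 0, fun i => ?_⟩
    have h0 : (a i : ℝ) = 0 := by rw [hrep i, Finset.univ_eq_empty, Finset.sum_empty]
    have : a i = 0 := by exact_mod_cast h0
    rw [this, Finset.univ_eq_empty, Finset.sum_empty]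
  -- nonempty case
  obtain ⟨e₀, he₀⟩ := hne
  have hd1 : 1 ≤ d := by
    rw [← hC e₀ he₀]
    exact Finset.card_pos.mpr (C.nonempty_edges e₀ he₀)
  have ha0 : ∀ i, 0 ≤ a i := by
    intro i
    have : (0:ℝ) ≤ (a i : ℝ) := by
      rw [hrep i]
      apply Finset.sum_nonneg
      intro e _
      exact mul_nonneg (hlam e) (by split <;> norm_num)
    exact_mod_cast this
  set α : Fin n → ℕ := fun i => (a i).toNat with hα
  have hαa : ∀ i, ((α i : ℕ) : ℝ) = (a i : ℝ) := by
    intro i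
    have h' : ((α i : ℕ) : ℤ) = a i := by rw [hα]; exact Int.toNat_of_nonneg (ha0 i)
    exact_mod_cast h'
  obtain ⟨x, y, hcov, hsupp, hcap, heq⟩ := hM α
  set L : ℝ := ∑ e : {e // e ∈ C.edges}, lam e with hL
  -- (1) total degree
  have eq1 : ∑ i, (a i : ℝ) = d * L := by
    have := inner_swap' C (fun _ => 1) lam
    simp only [one_mul] at this
    calc ∑ i, (a i : ℝ) = ∑ i, (1:ℝ) * ∑ e : {e // e ∈ C.edges}, lam e * (if i ∈ e.1 then 1 else 0) := by
          simp only [one_mul]; exact Finset.sum_congr rfl fun i _ => hrep i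
    _ = ∑ e : {e // e ∈ C.edges}, lam e * ∑ i ∈ e.1, (1:ℝ) := inner_swap' C (fun _ => 1) lam
    _ = ∑ e : {e // e ∈ C.edges}, lam e * d := by
          apply Finset.sum_congr rfl
          intro e _
          rw [Finset.sum_const, nsmul_eq_mul, mul_one, hC e.1 e.2]
    _ = d * L := by rw [hL, ← Finset.sum_mul]; ring
  -- (2) L ≤ primal objective
  have ineq2 : L ≤ ∑ i, (α i : ℝ) * (x i : ℝ) := by
    have hswap := inner_swap' C (fun i => (x i : ℝ)) lam
    have : ∑ i, (α i : ℝ) * (x i : ℝ) = ∑ e : {e // e ∈ C.edges}, lam e * ∑ i ∈ e.1, (x i : ℝ) := by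
      rw [← hswap]
      apply Finset.sum_congr rfl
      intro i _
      rw [mul_comm]
      congr 1
      rw [hαa i]
      exact hrep i
    rw [this, hL]
    apply Finset.sum_le_sum
    intro e _
    have hc : (1:ℝ) ≤ ∑ i ∈ e.1, (x i : ℝ) := by
      have := hcov e.1 e.2
      exact_mod_cast this
    nlinarith [hlam e, hc]
  -- (3) d * dual objective ≤ total degree
  have ineq3 : (d:ℝ) * ∑ e ∈ C.edges, (y e : ℝ) ≤ ∑ i, (a i : ℝ) := by
    have hswap := inner_swap C.edges (fun _ => 1) (fun e => (y e : ℝ))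
    simp only [one_mul] at hswap
    have hl : ∑ e ∈ C.edges, (y e : ℝ) * ∑ i ∈ e, (1:ℝ) = (d:ℝ) * ∑ e ∈ C.edges, (y e : ℝ) := by
      rw [Finset.mul_sum]
      apply Finset.sum_congr rfl
      intro e he
      rw [Finset.sum_const, nsmul_eq_mul, mul_one, hC e he]
      ring
    rw [← hl, ← hswap]
    apply Finset.sum_le_sum
    intro i _
    have := hcap i
    have hcast : (∑ e ∈ C.edges.filter (fun e => i ∈ e), (y e:ℝ)) ≤ (α i : ℝ) := by
      exact_mod_cast this
    calc ∑ e ∈ C.edges.filter (fun e => i ∈ e), (y e:ℝ) ≤ (α i : ℝ) := hcast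
    _ = (a i : ℝ) := hαa i
  -- equality of objectives
  have heqR : ∑ i, (α i : ℝ) * (x i : ℝ) = ∑ e ∈ C.edges, (y e : ℝ) := by exact_mod_cast heq
  have hYL : ∑ e ∈ C.edges, (y e : ℝ) = L := by
    have h1 : L ≤ ∑ e ∈ C.edges, (y e : ℝ) := heqR ▸ ineq2
    have h2 : (d:ℝ) * ∑ e ∈ C.edges, (y e : ℝ) ≤ (d:ℝ) * L := by
      have h2' := ineq3
      rw [eq1] at h2'
      exact h2'
    have hd : (1:ℝ) ≤ (d:ℝ) := by exact_mod_cast hd1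
    nlinarith
  -- pointwise equality
  have htot : ∑ i, (a i : ℝ) = ∑ i, ∑ e ∈ C.edges.filter (fun e => i ∈ e), (y e : ℝ) := by
    have hswap := inner_swap C.edges (fun _ => 1) (fun e => (y e : ℝ))
    simp only [one_mul] at hswap
    rw [hswap, eq1]
    have : ∑ e ∈ C.edges, (y e:ℝ) * ∑ i ∈ e, (1:ℝ) = (d:ℝ) * ∑ e ∈ C.edges, (y e : ℝ) := by
      rw [Finset.mul_sum]
      apply Finset.sum_congr rfl
      intro e he
      rw [Finset.sum_const, nsmul_eq_mul, mul_one, hC e he]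
      ring
    rw [this, hYL]
  have hpt : ∀ i, (a i : ℝ) = ∑ e ∈ C.edges.filter (fun e => i ∈ e), (y e : ℝ) := by
    have hle : ∀ i ∈ Finset.univ, (∑ e ∈ C.edges.filter (fun e => i ∈ e), (y e : ℝ)) ≤ (a i : ℝ) := by
      intro i _
      have := hcap i
      have : (∑ e ∈ C.edges.filter (fun e => i ∈ e), (y e:ℝ)) ≤ (α i : ℝ) := by exact_mod_cast this
      rw [hαa i] at this; exact this
    intro i
    by_contra hne'
    have hlt : ∑ e ∈ C.edges.filter (fun e => i ∈ e), (y e : ℝ) < (a i : ℝ) :=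
      lt_of_le_of_ne (hle i (Finset.mem_univ i)) (fun hh => hne' hh.symm)
    have : ∑ j, ∑ e ∈ C.edges.filter (fun e => j ∈ e), (y e : ℝ) < ∑ j, (a j : ℝ) :=
      Finset.sum_lt_sum hle ⟨i, Finset.mem_univ i, hlt⟩
    rw [htot] at this
    exact lt_irrefl _ this
  refine ⟨fun e => y e.1, fun i => ?_⟩
  have hnat : ∑ e ∈ C.edges.filter (fun e => i ∈ e), y e
      = ∑ e : {e // e ∈ C.edges}, (if i ∈ e.1 then y e.1 else 0) :=
    filter_sum_subtype C (fun e => i ∈ e) y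
  have : (a i : ℝ) = ((∑ e : {e // e ∈ C.edges}, (if i ∈ e.1 then y e.1 else 0) : ℕ) : ℝ) := by
    rw [← hnat]
    rw [hpt i]
    push_cast
    rfl
  have haz : a i = ((∑ e : {e // e ∈ C.edges}, (if i ∈ e.1 then y e.1 else 0) : ℕ) : ℤ) := by
    exact_mod_cast this
  rw [haz]
  push_cast
  apply Finset.sum_congr rfl
  intro e _
  split <;> simp

theorem qaintegral_of_mfmc (C : Clutter n) (hM : C.HasMFMC) : C.QAIntegral := by
  classical
  intro xs hxs i0
  obtain ⟨hxQ, hext⟩ := hxs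
  obtain ⟨hx0, hxcov⟩ := hxQ
  set T : Finset (Fin n) := Finset.univ.filter (fun i => xs i = 0) with hT
  set Ee : Finset (Finset (Fin n)) := C.edges.filter (fun e => ∑ j ∈ e, xs j = 1) with hEe
  -- uniqueness of the tight solution
  have uniq : ∀ v : Fin n → ℝ, (∀ i ∈ T, v i = 0) → (∀ e ∈ Ee, ∑ j ∈ e, v j = 0) → v = 0 := by
    intro v hvT hvE
    set s1 : Finset ℝ := (Finset.univ.filter (fun i => xs i ≠ 0)).image
      (fun i => xs i / (|v i| + 1)) with hs1
    set s2 : Finset ℝ := (C.edges.filter (fun e => ¬ (∑ j ∈ e, xs j = 1))).image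
      (fun e => (∑ j ∈ e, xs j - 1) / (|∑ j ∈ e, v j| + 1)) with hs2
    set s : Finset ℝ := insert 1 (s1 ∪ s2) with hs
    have h1s : (1:ℝ) ∈ s := Finset.mem_insert_self 1 _
    set ε : ℝ := s.min' ⟨1, h1s⟩ with hε
    have hεpos : 0 < ε := by
      apply lt_of_lt_of_le _ (le_refl ε)
      have := Finset.min'_mem s ⟨1, h1s⟩
      rw [← hε] at this
      rw [hs] at this
      rcases Finset.mem_insert.mp this with h | h
      · rw [h]; norm_num
      · rcases Finset.mem_union.mp h with h | h
        · rw [hs1] at h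
          obtain ⟨i, hi, hval⟩ := Finset.mem_image.mp h
          have hxi : 0 < xs i := lt_of_le_of_ne (hx0 i)
            (fun hh => (Finset.mem_filter.mp hi).2 hh.symm)
          rw [← hval]
          positivity
        · rw [hs2] at h
          obtain ⟨e, he, hval⟩ := Finset.mem_image.mp h
          have h1 : 1 ≤ ∑ j ∈ e, xs j := hxcov e (Finset.mem_filter.mp he).1
          have h2 : ¬ (∑ j ∈ e, xs j = 1) := (Finset.mem_filter.mp he).2
          have : 0 < ∑ j ∈ e, xs j - 1 := by
            rcases lt_or_eq_of_le h1 with h | h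
            · linarith
            · exact absurd h.symm h2
          rw [← hval]
          positivity
    have hbound1 : ∀ i, xs i ≠ 0 → ε * (|v i| + 1) ≤ xs i := by
      intro i hi
      have hmem : xs i / (|v i| + 1) ∈ s := by
        rw [hs]
        apply Finset.mem_insert_of_mem
        apply Finset.mem_union_left
        rw [hs1]
        exact Finset.mem_image.mpr ⟨i, Finset.mem_filter.mpr ⟨Finset.mem_univ i, hi⟩, rfl⟩
      have := Finset.min'_le s _ hmem
      rw [← hε] at this
      have hd : (0:ℝ) < |v i| + 1 := by positivity
      calc ε * (|v i| + 1) ≤ (xs i / (|v i| + 1)) * (|v i| + 1) := by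
            apply mul_le_mul_of_nonneg_right this hd.le
      _ = xs i := by field_simp
    have hbound2 : ∀ e ∈ C.edges, ¬ (∑ j ∈ e, xs j = 1) →
        ε * (|∑ j ∈ e, v j| + 1) ≤ ∑ j ∈ e, xs j - 1 := by
      intro e he hne
      have hmem : (∑ j ∈ e, xs j - 1) / (|∑ j ∈ e, v j| + 1) ∈ s := by
        rw [hs]
        apply Finset.mem_insert_of_mem
        apply Finset.mem_union_right
        rw [hs2]
        exact Finset.mem_image.mpr ⟨e, Finset.mem_filter.mpr ⟨he, hne⟩, rfl⟩
      have := Finset.min'_le s _ hmem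
      rw [← hε] at this
      have hd : (0:ℝ) < |∑ j ∈ e, v j| + 1 := by positivity
      calc ε * (|∑ j ∈ e, v j| + 1) ≤ ((∑ j ∈ e, xs j - 1) / (|∑ j ∈ e, v j| + 1)) * (|∑ j ∈ e, v j| + 1) := by
            apply mul_le_mul_of_nonneg_right this hd.le
      _ = ∑ j ∈ e, xs j - 1 := by field_simp
    have hmemQA : ∀ σ : ℝ, |σ| ≤ 1 → (fun j => xs j + σ * ε * v j) ∈ C.QA := by
      intro σ hσ
      constructor
      · intro i
        show 0 ≤ xs i + σ * ε * v i
        by_cases hi : xs i = 0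
        · have hvi : v i = 0 := hvT i (Finset.mem_filter.mpr ⟨Finset.mem_univ i, hi⟩)
          simp [hi, hvi]
        · have h1 := hbound1 i hi
          have h2 : |σ * ε * v i| ≤ ε * (|v i| + 1) := by
            rw [abs_mul, abs_mul, abs_of_pos hεpos]
            have hσε : |σ| * ε ≤ ε := by nlinarith [abs_nonneg σ]
            nlinarith [abs_nonneg (v i), abs_nonneg σ]
          have := neg_abs_le (σ * ε * v i)
          linarith
      · intro e he
        show 1 ≤ ∑ j ∈ e, (xs j + σ * ε * v j)
        by_cases hee : ∑ j ∈ e, xs j = 1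
        · have hve : ∑ j ∈ e, v j = 0 := hvE e (Finset.mem_filter.mpr ⟨he, hee⟩)
          rw [Finset.sum_add_distrib]
          have : ∑ j ∈ e, σ * ε * v j = σ * ε * ∑ j ∈ e, v j := by
            rw [Finset.mul_sum]
          rw [this, hve, hee]
          norm_num
        · have h1 := hbound2 e he hee
          rw [Finset.sum_add_distrib]
          have hsum : ∑ j ∈ e, σ * ε * v j = σ * ε * ∑ j ∈ e, v j := by
            rw [Finset.mul_sum]
          rw [hsum]
          have h2 : |σ * ε * ∑ j ∈ e, v j| ≤ ε * (|∑ j ∈ e, v j| + 1) := by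
            rw [abs_mul, abs_mul, abs_of_pos hεpos]
            nlinarith [abs_nonneg (∑ j ∈ e, v j), abs_nonneg σ,
              mul_nonneg (mul_nonneg (sub_nonneg.mpr hσ) hεpos.le) (abs_nonneg (∑ j ∈ e, v j))]
          have := neg_abs_le (σ * ε * ∑ j ∈ e, v j)
          linarith
    have hxp : (fun j => xs j + ε * v j) ∈ C.QA := by
      have := hmemQA 1 (by norm_num)
      simpa using this
    have hxm : (fun j => xs j - ε * v j) ∈ C.QA := by
      have := hmemQA (-1) (by norm_num)
      have heq : (fun j => xs j + (-1) * ε * v j) = (fun j => xs j - ε * v j) := by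
        funext j; ring
      rwa [heq] at this
    have hseg : xs ∈ openSegment ℝ (fun j => xs j - ε * v j) (fun j => xs j + ε * v j) := by
      refine ⟨1/2, 1/2, by norm_num, by norm_num, by norm_num, ?_⟩
      funext j
      simp only [Pi.add_apply, Pi.smul_apply, smul_eq_mul]
      ring
    have hp2 := hext hxp hxm (by rw [openSegment_symm]; exact hseg)
    funext j
    have : xs j + ε * v j = xs j := congrFun hp2 j
    have : ε * v j = 0 := by linarith
    have := mul_eq_zero.mp this
    rcases this with h | h
    · exact absurd h (ne_of_gt hεpos)
    · exact h
  -- the weight vector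
  set α : Fin n → ℕ := fun i => (if i ∈ T then 1 else 0) + (Ee.filter (fun e => i ∈ e)).card with hα
  obtain ⟨x, y, hcov, hsupp, hcap, heq⟩ := hM α
  -- decomposition of the objective
  have hdec : ∀ w : Fin n → ℝ,
      ∑ i, (α i : ℝ) * w i = (∑ i ∈ T, w i) + ∑ e ∈ Ee, ∑ j ∈ e, w j := by
    intro w
    have : ∀ i, (α i : ℝ) * w i
        = (if i ∈ T then w i else 0) + (Ee.filter (fun e => i ∈ e)).card * w i := by
      intro i
      rw [hα]
      push_cast
      split <;> ring
    rw [Finset.sum_congr rfl (fun i _ => this i), Finset.sum_add_distrib]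
    congr 1
    · rw [← Finset.sum_filter]
      congr 1
      ext i
      simp [hT]
    · have hswap := inner_swap Ee w (fun _ => (1:ℝ))
      simp only [one_mul] at hswap
      calc ∑ i, ((Ee.filter (fun e => i ∈ e)).card : ℝ) * w i
          = ∑ i, w i * ∑ e ∈ Ee.filter (fun e => i ∈ e), (1:ℝ) := by
            apply Finset.sum_congr rfl
            intro i _
            rw [Finset.sum_const, nsmul_eq_mul, mul_one, mul_comm]
      _ = ∑ e ∈ Ee, ∑ j ∈ e, w j := hswap
  -- xs is feasible with objective = Ee.card
  have hobj_xs : ∑ i, (α i : ℝ) * xs i = (Ee.card : ℝ) := by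
    rw [hdec xs]
    have h1 : ∑ i ∈ T, xs i = 0 := by
      apply Finset.sum_eq_zero
      intro i hi
      exact (Finset.mem_filter.mp hi).2
    have h2 : ∑ e ∈ Ee, ∑ j ∈ e, xs j = (Ee.card : ℝ) := by
      rw [Finset.card_eq_sum_ones]
      push_cast
      apply Finset.sum_congr rfl
      intro e he
      exact (Finset.mem_filter.mp he).2
    rw [h1, h2, zero_add]
  -- x (cast) is feasible
  have hxQA : (fun i => (x i : ℝ)) ∈ C.QA := by
    constructor
    · intro i; positivity
    · intro e he
      show (1:ℝ) ≤ ∑ i ∈ e, (x i : ℝ)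
      exact_mod_cast hcov e he
  -- lower bound for feasible points
  have hlow : ∀ w : Fin n → ℝ, w ∈ C.QA → (Ee.card : ℝ) ≤ ∑ i, (α i : ℝ) * w i := by
    intro w hw
    rw [hdec w]
    have h1 : (0:ℝ) ≤ ∑ i ∈ T, w i := Finset.sum_nonneg fun i _ => hw.1 i
    have h2 : (Ee.card : ℝ) ≤ ∑ e ∈ Ee, ∑ j ∈ e, w j := by
      rw [Finset.card_eq_sum_ones]
      push_cast
      apply Finset.sum_le_sum
      intro e he
      exact hw.2 e (Finset.mem_filter.mp he).1
    linarith
  -- weak duality against xs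
  have hwd : (∑ e ∈ C.edges, (y e : ℝ)) ≤ ∑ i, (α i : ℝ) * xs i := by
    have hswap := inner_swap C.edges xs (fun e => (y e : ℝ))
    have step1 : (∑ e ∈ C.edges, (y e : ℝ)) ≤ ∑ e ∈ C.edges, (y e : ℝ) * ∑ j ∈ e, xs j := by
      apply Finset.sum_le_sum
      intro e he
      have hy : (0:ℝ) ≤ (y e : ℝ) := Nat.cast_nonneg _
      nlinarith [hxcov e he]
    have step2 : ∑ i, xs i * (∑ e ∈ C.edges.filter (fun e => i ∈ e), (y e : ℝ))
        ≤ ∑ i, (α i : ℝ) * xs i := by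
      apply Finset.sum_le_sum
      intro i _
      rw [mul_comm ((α i : ℝ))]
      apply mul_le_mul_of_nonneg_left _ (hx0 i)
      exact_mod_cast hcap i
    calc (∑ e ∈ C.edges, (y e : ℝ)) ≤ ∑ e ∈ C.edges, (y e : ℝ) * ∑ j ∈ e, xs j := step1
    _ = ∑ i, xs i * (∑ e ∈ C.edges.filter (fun e => i ∈ e), (y e : ℝ)) := hswap.symm
    _ ≤ ∑ i, (α i : ℝ) * xs i := step2
  -- chain of equalities
  have heqR : ∑ i, (α i : ℝ) * (x i : ℝ) = ∑ e ∈ C.edges, (y e : ℝ) := by exact_mod_cast heq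
  have hxEq : ∑ i, (α i : ℝ) * (x i : ℝ) = (Ee.card : ℝ) := by
    have h1 := hlow _ hxQA
    rw [hobj_xs] at hwd
    rw [heqR]
    linarith [heqR ▸ h1]
  -- extract combinatorial equalities over ℕ
  have hxEqN : ∑ i ∈ T, x i + ∑ e ∈ Ee, ∑ j ∈ e, x j = Ee.card := by
    have : (↑(∑ i ∈ T, x i + ∑ e ∈ Ee, ∑ j ∈ e, x j) : ℝ) = (Ee.card : ℝ) := by
      push_cast
      rw [← hdec (fun i => (x i : ℝ))]
      exact hxEq
    exact_mod_cast this
  have hEe_ge : ∀ e ∈ Ee, 1 ≤ ∑ j ∈ e, x j := fun e he => hcov e (Finset.mem_filter.mp he).1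
  have hsum_ge : Ee.card ≤ ∑ e ∈ Ee, ∑ j ∈ e, x j := by
    rw [Finset.card_eq_sum_ones]
    exact Finset.sum_le_sum hEe_ge
  have hTzero : ∀ i ∈ T, x i = 0 := by
    have h0 : ∑ i ∈ T, x i = 0 := by omega
    intro i hi
    exact (Finset.sum_eq_zero_iff).mp h0 i hi
  have hEeSum : ∑ e ∈ Ee, ∑ j ∈ e, x j = Ee.card := by omega
  have hEeTight : ∀ e ∈ Ee, ∑ j ∈ e, x j = 1 := by
    by_contra hcon
    push_neg at hcon
    obtain ⟨e, he, hne⟩ := hcon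
    have hlt : ∀ f ∈ Ee, 1 ≤ ∑ j ∈ f, x j := hEe_ge
    have : Ee.card < ∑ f ∈ Ee, ∑ j ∈ f, x j := by
      rw [Finset.card_eq_sum_ones]
      apply Finset.sum_lt_sum hlt
      exact ⟨e, he, lt_of_le_of_ne (hEe_ge e he) (Ne.symm hne)⟩
    omega
  -- conclude via uniqueness
  have hfin : (fun i => (x i : ℝ)) - xs = 0 := by
    apply uniq
    · intro i hi
      have h1 := hTzero i hi
      have h2 := (Finset.mem_filter.mp hi).2
      simp [h1, h2]
    · intro e he
      have h1 := hEeTight e he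
      have h2 := (Finset.mem_filter.mp he).2
      simp only [Pi.sub_apply]
      rw [Finset.sum_sub_distrib, h2]
      have : ∑ j ∈ e, ((x j : ℝ)) = 1 := by exact_mod_cast h1
      rw [this]
      ring
  have hxs_eq : xs = (fun i => (x i : ℝ)) := by
    have := sub_eq_zero.mp hfin
    exact this.symm
  exact ⟨(x i0 : ℤ), by rw [hxs_eq]; push_cast; rfl⟩

-- ### Backward direction machinery

lemma QA_closed (C : Clutter n) : IsClosed C.QA := by
  have hrepr : C.QA = (⋂ i, {x : Fin n → ℝ | 0 ≤ x i}) ∩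
      ⋂ e ∈ C.edges, {x : Fin n → ℝ | 1 ≤ ∑ j ∈ e, x j} := by
    ext x
    simp [Clutter.QA, Set.mem_iInter]
  rw [hrepr]
  apply IsClosed.inter
  · exact isClosed_iInter fun i => isClosed_le continuous_const (continuous_apply i)
  · exact isClosed_biInter fun e _ => isClosed_le continuous_const
      (continuous_finset_sum _ fun j _ => continuous_apply j)

lemma QA_min_exists (C : Clutter n) (hne : C.edges.Nonempty) (hInt : C.QAIntegral)
    (β : Fin n → ℝ) (hβ : ∀ i, 0 < β i) :
    ∃ z : Fin n → ℕ, ((fun i => (z i : ℝ)) ∈ C.QA) ∧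
      ∀ x ∈ C.QA, ∑ i, β i * (z i : ℝ) ≤ ∑ i, β i * x i := by
  classical
  set f : (Fin n → ℝ) → ℝ := fun x => ∑ i, β i * x i with hf
  have hfcont : Continuous f := by
    apply continuous_finset_sum
    intro i _
    exact continuous_const.mul (continuous_apply i)
  set clip : (Fin n → ℝ) → (Fin n → ℝ) := fun x j => min (x j) 1 with hclip
  have hclipQA : ∀ x ∈ C.QA, clip x ∈ C.QA := by
    intro x hx
    constructor
    · intro j
      exact le_min (hx.1 j) zero_le_one
    · intro e he
      by_cases hbig : ∃ j ∈ e, 1 ≤ x j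
      · obtain ⟨j, hje, hj⟩ := hbig
        have h1 : clip x j = 1 := min_eq_right hj
        have : clip x j ≤ ∑ k ∈ e, clip x k := by
          apply Finset.single_le_sum _ hje
          intro k _
          exact le_min (hx.1 k) zero_le_one
        rw [h1] at this
        exact this
      · push_neg at hbig
        have : ∀ j ∈ e, clip x j = x j := fun j hj => min_eq_left (hbig j hj).le
        rw [Finset.sum_congr rfl this]
        exact hx.2 e he
  have hclip_box : ∀ x ∈ C.QA, clip x ∈ Set.Icc (0 : Fin n → ℝ) 1 := by
    intro x hx
    constructor
    · intro j; exact le_min (hx.1 j) zero_le_one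
    · intro j; exact min_le_right _ _
  have hclip_obj : ∀ x ∈ C.QA, f (clip x) ≤ f x := by
    intro x hx
    apply Finset.sum_le_sum
    intro j _
    exact mul_le_mul_of_nonneg_left (min_le_left _ _) (hβ j).le
  set P : Set (Fin n → ℝ) := C.QA ∩ Set.Icc (0 : Fin n → ℝ) 1 with hP
  have hPcompact : IsCompact P := (isCompact_Icc).inter_left (QA_closed C)
  have hone : (1 : Fin n → ℝ) ∈ P := by
    refine ⟨⟨fun i => zero_le_one, fun e he => ?_⟩, fun j => zero_le_one, le_refl _⟩
    have hc : 1 ≤ e.card := Finset.card_pos.mpr (C.nonempty_edges e he)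
    have : ∑ j ∈ e, (1:ℝ) = (e.card : ℝ) := by
      rw [Finset.sum_const, nsmul_eq_mul, mul_one]
    rw [Pi.one_def]
    rw [this]
    exact_mod_cast hc
  obtain ⟨z₀, hz₀P, hz₀min⟩ := hPcompact.exists_isMinOn ⟨1, hone⟩ hfcont.continuousOn
  set m : ℝ := f z₀ with hm
  have hminQA : ∀ x ∈ C.QA, m ≤ f x := by
    intro x hx
    calc m ≤ f (clip x) := hz₀min ⟨hclipQA x hx, hclip_box x hx⟩
    _ ≤ f x := hclip_obj x hx
  set G : Set (Fin n → ℝ) := {x ∈ C.QA | f x = m} with hG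
  have hGsubP : G ⊆ P := by
    rintro x ⟨hxQ, hxm⟩
    refine ⟨hxQ, fun j => hxQ.1 j, fun j => ?_⟩
    by_contra hj
    push_neg at hj
    have hstrict : f (clip x) < f x := by
      apply Finset.sum_lt_sum
      · intro k _
        exact mul_le_mul_of_nonneg_left (min_le_left _ _) (hβ k).le
      · refine ⟨j, Finset.mem_univ j, ?_⟩
        have : clip x j = 1 := min_eq_right hj.le
        rw [this]
        exact mul_lt_mul_of_pos_left hj (hβ j)
    have := hminQA _ (hclipQA x hxQ)
    rw [hxm] at hstrict
    linarith
  have hGclosed : IsClosed G := by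
    have : G = C.QA ∩ f ⁻¹' {m} := by
      ext x; simp [hG]
    rw [this]
    exact (QA_closed C).inter (IsClosed.preimage hfcont isClosed_singleton)
  have hGconvex : Convex ℝ G := by
    rintro x ⟨hxQ, hxm⟩ y ⟨hyQ, hym⟩ a b ha hb hab
    have hfaff : f (a • x + b • y) = a * f x + b * f y := by
      rw [hf]
      simp only [Pi.add_apply, Pi.smul_apply, smul_eq_mul]
      rw [Finset.mul_sum, Finset.mul_sum, ← Finset.sum_add_distrib]
      apply Finset.sum_congr rfl
      intro i _
      ring
    constructor
    · constructor
      · intro i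
        simp only [Pi.add_apply, Pi.smul_apply, smul_eq_mul]
        have := hxQ.1 i; have := hyQ.1 i
        positivity
      · intro e he
        have h1 := hxQ.2 e he
        have h2 := hyQ.2 e he
        have : ∑ j ∈ e, (a • x + b • y) j = a * ∑ j ∈ e, x j + b * ∑ j ∈ e, y j := by
          simp only [Pi.add_apply, Pi.smul_apply, smul_eq_mul]
          rw [Finset.mul_sum, Finset.mul_sum, ← Finset.sum_add_distrib]
        rw [this]
        nlinarith
    · rw [hfaff, hxm, hym, ← add_mul, hab, one_mul]
  have hGcompact : IsCompact G := hPcompact.of_isClosed_subset hGclosed hGsubP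
  have hGne : G.Nonempty := ⟨z₀, hz₀P.1, rfl⟩
  obtain ⟨z, hzG⟩ := hGcompact.extremePoints_nonempty hGne
  obtain ⟨⟨hzQ, hzm⟩, hzext⟩ := hzG
  -- z is an extreme point of QA
  have hzQA_ext : z ∈ Set.extremePoints ℝ C.QA := by
    refine ⟨hzQ, ?_⟩
    intro x₁ hx₁ x₂ hx₂ hseg
    obtain ⟨a, b, ha, hb, hab, habz⟩ := hseg
    have hfz : a * f x₁ + b * f x₂ = m := by
      rw [← hzm, ← habz]
      rw [hf]
      simp only [Pi.add_apply, Pi.smul_apply, smul_eq_mul]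
      rw [Finset.mul_sum, Finset.mul_sum, ← Finset.sum_add_distrib]
      apply Finset.sum_congr rfl
      intro i _
      ring
    have h1 := hminQA x₁ hx₁
    have h2 := hminQA x₂ hx₂
    have e0 : a * (f x₁ - m) + b * (f x₂ - m) = 0 := by linear_combination hfz - m * hab
    have p1 : 0 ≤ a * (f x₁ - m) := mul_nonneg ha.le (sub_nonneg.mpr h1)
    have p2 : 0 ≤ b * (f x₂ - m) := mul_nonneg hb.le (sub_nonneg.mpr h2)
    have q1 : a * (f x₁ - m) = 0 := by linarith
    have q2 : b * (f x₂ - m) = 0 := by linarith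
    have hfx₁ : f x₁ = m := by
      rcases mul_eq_zero.mp q1 with h | h
      · exact absurd h (ne_of_gt ha)
      · linarith
    have hfx₂ : f x₂ = m := by
      rcases mul_eq_zero.mp q2 with h | h
      · exact absurd h (ne_of_gt hb)
      · linarith
    exact hzext ⟨hx₁, hfx₁⟩ ⟨hx₂, hfx₂⟩ ⟨a, b, ha, hb, hab, habz⟩
  -- integrality
  have hzint := hInt z hzQA_ext
  have hznat : ∀ i, ∃ k : ℕ, z i = (k : ℝ) := by
    intro i
    obtain ⟨w, hw⟩ := hzint i
    have hw0 : 0 ≤ w := by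
      have := hzQ.1 i
      rw [hw] at this
      exact_mod_cast this
    exact ⟨w.toNat, by rw [hw]; exact_mod_cast (Int.toNat_of_nonneg hw0).symm⟩
  choose zN hzN using hznat
  have hzfun : (fun i => (zN i : ℝ)) = z := funext fun i => (hzN i).symm
  refine ⟨zN, ?_, ?_⟩
  · rw [hzfun]; exact hzQ
  · intro x hx
    have : ∑ i, β i * (zN i : ℝ) = f z := by
      rw [hf, ← hzfun]
    rw [this]
    show f z ≤ f x
    rw [hzm]
    exact hminQA x hx

/-- The minimum weight of a cover. -/
noncomputable def nuInt (C : Clutter n) (α : Fin n → ℕ) : ℕ :=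
  sInf {k | ∃ S, C.IsCover S ∧ ∑ i ∈ S, α i = k}

lemma nuInt_set_nonempty (C : Clutter n) (α : Fin n → ℕ) :
    {k | ∃ S, C.IsCover S ∧ ∑ i ∈ S, α i = k}.Nonempty := by
  refine ⟨∑ i ∈ Finset.univ, α i, Finset.univ, fun e he => ?_, rfl⟩
  rw [Finset.inter_univ]
  exact C.nonempty_edges e he

lemma nuInt_attained (C : Clutter n) (α : Fin n → ℕ) :
    ∃ S, C.IsCover S ∧ ∑ i ∈ S, α i = nuInt C α :=
  Nat.sInf_mem (nuInt_set_nonempty C α)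

lemma nuInt_le (C : Clutter n) (α : Fin n → ℕ) {S : Finset (Fin n)} (hS : C.IsCover S) :
    nuInt C α ≤ ∑ i ∈ S, α i :=
  Nat.sInf_le ⟨S, hS, rfl⟩

lemma lp_lower (C : Clutter n) (hne : C.edges.Nonempty) (hInt : C.QAIntegral)
    (α : Fin n → ℕ) (ν : ℕ) (hν : ∀ S, C.IsCover S → ν ≤ ∑ i ∈ S, α i) :
    ∀ x ∈ C.QA, (ν : ℝ) ≤ ∑ i, (α i : ℝ) * x i := by
  classical
  intro x hx
  have key : ∀ ε : ℝ, 0 < ε → (ν : ℝ) ≤ ∑ i, (α i : ℝ) * x i + ε * ∑ i, x i := by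
    intro ε hε
    obtain ⟨z, hzQA, hzmin⟩ := QA_min_exists C hne hInt (fun i => (α i : ℝ) + ε)
      (fun i => by positivity)
    set S : Finset (Fin n) := Finset.univ.filter (fun i => 1 ≤ z i) with hS
    have hScov : C.IsCover S := by
      intro e he
      have h1 : (1:ℝ) ≤ ∑ j ∈ e, (z j : ℝ) := hzQA.2 e he
      have h2 : 1 ≤ ∑ j ∈ e, z j := by exact_mod_cast h1
      have : ∃ j ∈ e, 1 ≤ z j := by
        by_contra hcon
        push_neg at hcon
        have : ∑ j ∈ e, z j = 0 := Finset.sum_eq_zero fun j hj => by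
          have := hcon j hj; omega
        omega
      obtain ⟨j, hje, hjz⟩ := this
      exact ⟨j, Finset.mem_inter.mpr ⟨hje, Finset.mem_filter.mpr ⟨Finset.mem_univ j, hjz⟩⟩⟩
    have hchain : (ν : ℝ) ≤ ∑ i, ((α i : ℝ) + ε) * (z i : ℝ) := by
      have s1 : (ν : ℝ) ≤ ∑ i ∈ S, (α i : ℝ) := by
        have := hν S hScov
        exact_mod_cast this
      have s2 : ∑ i ∈ S, (α i : ℝ) ≤ ∑ i ∈ S, ((α i : ℝ) + ε) * (z i : ℝ) := by
        apply Finset.sum_le_sum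
        intro i hi
        have hz1 : (1:ℝ) ≤ (z i : ℝ) := by
          exact_mod_cast (Finset.mem_filter.mp hi).2
        nlinarith [Nat.cast_nonneg (α i) (α := ℝ)]
      have s3 : ∑ i ∈ S, ((α i : ℝ) + ε) * (z i : ℝ) ≤ ∑ i, ((α i : ℝ) + ε) * (z i : ℝ) := by
        apply Finset.sum_le_sum_of_subset_of_nonneg (Finset.subset_univ S)
        intro i _ _
        positivity
      linarith
    have hfinal := hzmin x hx
    calc (ν : ℝ) ≤ ∑ i, ((α i : ℝ) + ε) * (z i : ℝ) := hchain
    _ ≤ ∑ i, ((α i : ℝ) + ε) * x i := hfinal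
    _ = ∑ i, (α i : ℝ) * x i + ε * ∑ i, x i := by
        rw [Finset.mul_sum, ← Finset.sum_add_distrib]
        apply Finset.sum_congr rfl
        intro i _
        ring
  by_contra hcon
  push_neg at hcon
  have hsx : 0 ≤ ∑ i, x i := Finset.sum_nonneg fun i _ => hx.1 i
  set δ : ℝ := (ν : ℝ) - ∑ i, (α i : ℝ) * x i with hδ
  have hδpos : 0 < δ := by rw [hδ]; linarith
  have := key (δ / (2 * (∑ i, x i + 1))) (by positivity)
  have hfrac : (δ / (2 * (∑ i, x i + 1))) * ∑ i, x i < δ := by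
    rw [div_mul_eq_mul_div, div_lt_iff₀ (by positivity)]
    nlinarith
  rw [hδ] at hfrac
  linarith

section FarkasMachinery


variable {E : Type*} [NormedAddCommGroup E] [NormedSpace ℝ E] [FiniteDimensional ℝ E]
variable {ι : Type*} [Fintype ι]

/-- The cone generated by a finite family of vectors. -/
def coneSet (g : ι → E) : Set E :=
  {x | ∃ c : ι → ℝ, (∀ i, 0 ≤ c i) ∧ x = ∑ i, c i • g i}

theorem coneSet_caratheodory (g : ι → E) (s : Finset ι) :
    ∀ c : ι → ℝ, (∀ i, 0 ≤ c i) → (∀ i ∉ s, c i = 0) →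
    ∃ t : Finset ι, t ⊆ s ∧ LinearIndependent ℝ (fun i : t => g i) ∧
      ∃ c' : ι → ℝ, (∀ i, 0 ≤ c' i) ∧ (∀ i ∉ t, c' i = 0) ∧
        ∑ i, c' i • g i = ∑ i, c i • g i := by
  classical
  induction s using Finset.strongInduction with
  | _ s ih =>
    intro c hc hsupp
    by_cases hli : LinearIndependent ℝ (fun i : s => g i)
    · exact ⟨s, Finset.Subset.refl s, hli, c, hc, hsupp, rfl⟩
    · -- get a dependence relation
      obtain ⟨r0, hr0sum, j0, hj0⟩ := Fintype.not_linearIndependent_iff.mp hli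
      set r1 : ι → ℝ := fun i => if h : i ∈ s then r0 ⟨i, h⟩ else 0 with hr1
      have hr1sum : ∑ i, r1 i • g i = 0 := by
        rw [← Finset.sum_subset (Finset.subset_univ s)]
        · rw [← hr0sum, ← Finset.sum_attach s (fun i => r1 i • g i)]
          apply Finset.sum_congr rfl
          intro x _
          simp [hr1, x.2]
        · intro x _ hx
          simp [hr1, hx]
      have key : ∀ r : ι → ℝ, (∑ i, r i • g i = 0) → (∀ i ∉ s, r i = 0) →
          (∃ i ∈ s, 0 < r i) →
          ∃ t : Finset ι, t ⊆ s ∧ LinearIndependent ℝ (fun i : t => g i) ∧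
          ∃ c' : ι → ℝ, (∀ i, 0 ≤ c' i) ∧ (∀ i ∉ t, c' i = 0) ∧
            ∑ i, c' i • g i = ∑ i, c i • g i := by
        rintro r hrsum hroff ⟨ip, hips, hip⟩
        set T : Finset ι := s.filter (fun i => 0 < r i) with hT
        have hTne : T.Nonempty := ⟨ip, Finset.mem_filter.mpr ⟨hips, hip⟩⟩
        obtain ⟨i0, hi0T, hi0min⟩ := Finset.exists_min_image T (fun i => c i / r i) hTne
        have hi0s : i0 ∈ s := (Finset.mem_filter.mp hi0T).1
        have hri0 : 0 < r i0 := (Finset.mem_filter.mp hi0T).2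
        set θ : ℝ := c i0 / r i0 with hθ
        have hθ0 : 0 ≤ θ := div_nonneg (hc i0) hri0.le
        set c' : ι → ℝ := fun i => c i - θ * r i with hc'
        have hc'0 : ∀ i, 0 ≤ c' i := by
          intro i
          by_cases hi : 0 < r i
          · by_cases his : i ∈ s
            · have hiT : i ∈ T := Finset.mem_filter.mpr ⟨his, hi⟩
              have hdd : c i0 * r i ≤ c i * r i0 := (div_le_div_iff₀ hri0 hi).mp (hi0min i hiT)
              have : θ * r i ≤ c i := by
                rw [hθ, div_mul_eq_mul_div, div_le_iff₀ hri0]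
                exact hdd
              simp [hc']; linarith
            · exact absurd (hroff i his) (ne_of_gt hi)
          · push_neg at hi
            have : θ * r i ≤ 0 := mul_nonpos_of_nonneg_of_nonpos hθ0 hi
            have := hc i
            simp [hc']; linarith
        have hc'i0 : c' i0 = 0 := by
          simp [hc', hθ]
          field_simp
          ring
        have hc'off : ∀ i ∉ s.erase i0, c' i = 0 := by
          intro i hi
          simp only [Finset.mem_erase, not_and_or, not_not] at hi
          rcases hi with h | h
          · subst h; exact hc'i0
          · have h1 := hsupp i h
            have h2 := hroff i h
            simp [hc', h1, h2]
        have hc'sum : ∑ i, c' i • g i = ∑ i, c i • g i := by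
          simp only [hc', sub_smul, Finset.sum_sub_distrib, mul_smul]
          rw [← Finset.smul_sum, hrsum, smul_zero, sub_zero]
        obtain ⟨t, hts, hli', hrest⟩ := ih (s.erase i0) (Finset.erase_ssubset hi0s) c' hc'0 hc'off
        exact ⟨t, hts.trans (Finset.erase_subset _ _), hli', by
          obtain ⟨c'', h1, h2, h3⟩ := hrest
          exact ⟨c'', h1, h2, h3.trans hc'sum⟩⟩
      by_cases hpos : ∃ i ∈ s, 0 < r1 i
      · exact key r1 hr1sum (fun i hi => by simp [hr1, hi]) hpos
      · push_neg at hpos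
        have hj0s := j0.2
        have hr1j0 : r1 j0.1 ≠ 0 := by simpa [hr1, j0.2] using hj0
        apply key (fun i => - r1 i)
        · simp only [neg_smul, Finset.sum_neg_distrib, hr1sum, neg_zero]
        · intro i hi; simp [hr1, hi]
        · refine ⟨j0.1, j0.2, ?_⟩
          have := hpos j0.1 j0.2
          rcases lt_or_eq_of_le this with h | h
          · linarith
          · exact absurd h hr1j0

theorem coneSet_isClosed (g : ι → E) : IsClosed (coneSet g) := by
  classical
  -- coneSet is the finite union over linearly independent subsets
  have hrepr : coneSet g = ⋃ t ∈ {t : Finset ι | LinearIndependent ℝ (fun i : t => g i)},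
      (fun c : t → ℝ => ∑ i : t, c i • g i.1) '' {c | ∀ i, 0 ≤ c i} := by
    ext x
    constructor
    · rintro ⟨c, hc, rfl⟩
      obtain ⟨t, _, hli, c', hc'0, hc'off, hc'sum⟩ :=
        coneSet_caratheodory g Finset.univ c hc (by simp)
      refine Set.mem_biUnion hli ⟨fun i => c' i, fun i => hc'0 i, ?_⟩
      rw [← hc'sum]
      rw [← Finset.sum_subset (Finset.subset_univ t)]
      · exact (Finset.sum_attach t (fun i => c' i • g i)).symm ▸ rfl
      · intro i _ hi; simp [hc'off i hi]
    · intro hx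
      simp only [Set.mem_iUnion] at hx
      obtain ⟨t, ht, c, hc, rfl⟩ := hx
      refine ⟨fun i => if h : i ∈ t then c ⟨i, h⟩ else 0, fun i => ?_, ?_⟩
      · by_cases h : i ∈ t <;> simp [h, hc _]
      · rw [← Finset.sum_subset (Finset.subset_univ t)]
        · rw [← Finset.sum_attach t (fun i => (if h : i ∈ t then c ⟨i, h⟩ else 0) • g i)]
          apply Finset.sum_congr rfl
          intro i _
          simp [i.2]
        · intro i _ hi; simp [hi]
  rw [hrepr]
  apply Set.Finite.isClosed_biUnion (Set.toFinite _)
  intro t ht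
  -- image of the closed nonneg orthant under an injective linear map
  have hL : ∃ L : (t → ℝ) →ₗ[ℝ] E, ∀ c, L c = ∑ i : t, c i • g i.1 := by
    refine ⟨{ toFun := fun c => ∑ i : t, c i • g i.1, map_add' := ?_, map_smul' := ?_ }, fun c => rfl⟩
    · intro a b; simp [add_smul, Finset.sum_add_distrib]
    · intro m a; simp [smul_smul, Finset.smul_sum]
  obtain ⟨L, hLdef⟩ := hL
  have hinj : LinearMap.ker L = ⊥ := by
    rw [LinearMap.ker_eq_bot']
    intro c hc
    rw [hLdef] at hc
    exact funext (Fintype.linearIndependent_iff.mp ht c hc)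
  have hemb := LinearMap.isClosedEmbedding_of_injective (f := L) hinj
  have : (fun c : t → ℝ => ∑ i : t, c i • g i.1) '' {c | ∀ i, 0 ≤ c i}
      = L '' {c | ∀ i, 0 ≤ c i} := by
    apply Set.image_congr
    intro c _; rw [hLdef]
  rw [this]
  apply hemb.isClosedMap
  have : {c : t → ℝ | ∀ i, 0 ≤ c i} = Set.Ici 0 := by
    ext c; simp [Set.mem_Ici, Pi.le_def]
  rw [this]
  exact isClosed_Ici

theorem coneSet_convex (g : ι → E) : Convex ℝ (coneSet g) := by
  rintro x ⟨cx, hcx, rfl⟩ y ⟨cy, hcy, rfl⟩ a b ha hb hab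
  refine ⟨fun i => a * cx i + b * cy i, fun i =>
    add_nonneg (mul_nonneg ha (hcx i)) (mul_nonneg hb (hcy i)), ?_⟩
  rw [Finset.smul_sum, Finset.smul_sum, ← Finset.sum_add_distrib]
  apply Finset.sum_congr rfl
  intro i _
  simp [add_smul, smul_smul]

theorem zero_mem_coneSet (g : ι → E) : 0 ∈ coneSet g :=
  ⟨0, fun _ => le_refl 0, by simp⟩

theorem smul_mem_coneSet {g : ι → E} {x : E} (hx : x ∈ coneSet g) {t : ℝ} (ht : 0 ≤ t) :
    t • x ∈ coneSet g := by
  obtain ⟨c, hc, rfl⟩ := hx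
  exact ⟨fun i => t * c i, fun i => mul_nonneg ht (hc i),
    by rw [Finset.smul_sum]; exact Finset.sum_congr rfl fun i _ => (smul_smul t (c i) (g i))⟩

/-- Separation (Farkas): if `p` is not in the cone generated by `g`, there is a linear
functional nonpositive on all generators and positive at `p`. -/
theorem mem_coneSet_single (g : ι → E) (i : ι) : g i ∈ coneSet g := by
  classical
  refine ⟨fun j => if j = i then 1 else 0, fun j => by dsimp only; split <;> norm_num, ?_⟩
  simp [ite_smul]

theorem farkas_sep {g : ι → E} {p : E} (hp : p ∉ coneSet g) :
    ∃ f : E →L[ℝ] ℝ, (∀ i, f (g i) ≤ 0) ∧ 0 < f p := by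
  classical
  obtain ⟨f, u, hfs, hup⟩ :=
    geometric_hahn_banach_closed_point (coneSet_convex g) (coneSet_isClosed g) hp
  have hu0 : 0 < u := by simpa using hfs 0 (zero_mem_coneSet g)
  refine ⟨f, fun i => ?_, lt_trans hu0 hup⟩
  by_contra hpos
  push_neg at hpos
  have hmem : ∀ t : ℝ, 0 ≤ t → f (t • g i) < u := fun t ht =>
    hfs _ (smul_mem_coneSet (mem_coneSet_single g i) ht)
  have := hmem ((u + 1) / f (g i)) (div_nonneg (by linarith) hpos.le)
  rw [map_smul] at this
  simp only [smul_eq_mul] at this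
  rw [div_mul_cancel₀] at this
  · linarith
  · exact ne_of_gt hpos

end FarkasMachinery

section Dual
open Finset

lemma dual_exists {n : ℕ} (C : Clutter n) (hne : C.edges.Nonempty) (hInt : C.QAIntegral)
    (α : Fin n → ℕ) (ν : ℕ)
    (hlow : ∀ x ∈ C.QA, (ν : ℝ) ≤ ∑ i, (α i : ℝ) * x i) :
    ∃ lam : {e // e ∈ C.edges} → ℝ, (∀ e, 0 ≤ lam e) ∧
      (∀ i, ∑ e, lam e * (if i ∈ e.1 then 1 else 0) ≤ (α i : ℝ)) ∧
      (ν : ℝ) ≤ ∑ e, lam e := by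
  classical
  set g : ({e // e ∈ C.edges} ⊕ (Fin n ⊕ Unit)) → (Fin n → ℝ) × ℝ := fun k =>
    Sum.rec (fun e => ((fun j => if j ∈ e.1 then (1:ℝ) else 0), (1:ℝ)))
      (Sum.rec (fun i => (Pi.single i 1, 0)) (fun _ => (0, -1))) k with hgdef
  have hg1 : ∀ e, g (Sum.inl e) = ((fun j => if j ∈ e.1 then (1:ℝ) else 0), (1:ℝ)) := fun e => rfl
  have hg2 : ∀ i, g (Sum.inr (Sum.inl i)) = (Pi.single i 1, 0) := fun i => rfl
  have hg3 : ∀ u : Unit, g (Sum.inr (Sum.inr u)) = (0, -1) := fun u => rfl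
  set p : (Fin n → ℝ) × ℝ := ((fun i => (α i : ℝ)), (ν : ℝ)) with hp
  have hdecomp : ∀ (f : ((Fin n → ℝ) × ℝ) →L[ℝ] ℝ) (w : Fin n → ℝ) (s : ℝ),
      f (w, s) = ∑ i, w i * f (Pi.single i 1, 0) + s * f (0, 1) := by
    intro f w s
    have hws : ((w, s) : (Fin n → ℝ) × ℝ)
        = (∑ i, w i • ((Pi.single i 1 : Fin n → ℝ), (0:ℝ))) + s • ((0 : Fin n → ℝ), (1:ℝ)) := by
      apply Prod.ext
      · rw [Prod.fst_add, Prod.fst_sum]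
        simp only [Prod.smul_fst, Prod.smul_snd]
        have h1 : ∑ i, w i • (Pi.single i 1 : Fin n → ℝ) = w := by
          funext j
          rw [Finset.sum_apply]
          simp [Pi.single_apply]
        simp [h1]
      · rw [Prod.snd_add, Prod.snd_sum]
        simp
    rw [hws, map_add, map_sum, map_smul]
    simp only [map_smul, smul_eq_mul]
  have hpmem : p ∈ coneSet g := by
    by_contra hpnot
    obtain ⟨f, hfg, hfp⟩ := farkas_sep hpnot
    set x : Fin n → ℝ := fun i => - f (Pi.single i 1, 0) with hx
    set t : ℝ := f (0, 1) with ht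
    have hx0 : ∀ i, 0 ≤ x i := by
      intro i
      have := hfg (Sum.inr (Sum.inl i))
      rw [hg2 i] at this
      simp only [hx]
      linarith [this]
    have ht0 : 0 ≤ t := by
      have := hfg (Sum.inr (Sum.inr ()))
      rw [hg3 ()] at this
      have hneg : ((0 : Fin n → ℝ), (-1:ℝ)) = -((0 : Fin n → ℝ), (1:ℝ)) := by
        apply Prod.ext <;> simp
      rw [hneg, map_neg] at this
      rw [ht]
      linarith
    have hedge : ∀ e : {e // e ∈ C.edges}, t ≤ ∑ i ∈ e.1, x i := by
      intro e
      have := hfg (Sum.inl e)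
      rw [hg1 e] at this
      rw [hdecomp f _ 1] at this
      have hsum : ∑ i, (if i ∈ e.1 then (1:ℝ) else 0) * f (Pi.single i 1, 0)
          = ∑ i ∈ e.1, f (Pi.single i 1, 0) := by
        simp only [ite_mul, zero_mul, one_mul]
        rw [← Finset.sum_filter]
        congr 1
        ext i; simp
      rw [hsum] at this
      have hneg : ∑ i ∈ e.1, f (Pi.single i 1, 0) = - ∑ i ∈ e.1, x i := by
        rw [← Finset.sum_neg_distrib]
        apply Finset.sum_congr rfl
        intro i _
        simp [hx]
      rw [hneg] at this
      rw [ht]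
      linarith
    have hpval : (∑ i, (α i : ℝ) * x i) < (ν:ℝ) * t := by
      have hv := hfp
      rw [hp] at hv
      rw [hdecomp f _ _] at hv
      have hsum : ∑ i, (α i : ℝ) * f (Pi.single i 1, 0) = - ∑ i, (α i : ℝ) * x i := by
        rw [← Finset.sum_neg_distrib]
        apply Finset.sum_congr rfl
        intro i _
        simp only [hx]
        ring
      rw [hsum] at hv
      rw [ht]
      linarith
    rcases eq_or_lt_of_le ht0 with hteq | htpos
    · have hnonneg : 0 ≤ ∑ i, (α i : ℝ) * x i :=
        Finset.sum_nonneg fun i _ => mul_nonneg (Nat.cast_nonneg _) (hx0 i)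
      rw [← hteq, mul_zero] at hpval
      linarith
    · have hxt : (fun i => x i / t) ∈ C.QA := by
        constructor
        · intro i
          exact div_nonneg (hx0 i) (le_of_lt htpos)
        · intro e he
          show (1:ℝ) ≤ ∑ j ∈ e, x j / t
          rw [← Finset.sum_div, le_div_iff₀ htpos, one_mul]
          exact hedge ⟨e, he⟩
      have hl := hlow _ hxt
      have hexp : ∑ i, (α i : ℝ) * (x i / t) = (∑ i, (α i : ℝ) * x i) / t := by
        rw [Finset.sum_div]
        apply Finset.sum_congr rfl
        intro i _
        ring
      rw [hexp, le_div_iff₀ htpos] at hl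
      linarith
  obtain ⟨c, hc0, hcsum⟩ := hpmem
  set lam : {e // e ∈ C.edges} → ℝ := fun e => c (Sum.inl e) with hlam
  have hsplit : ∑ k, c k • g k
      = (∑ e : {e // e ∈ C.edges}, c (Sum.inl e) • g (Sum.inl e))
        + ((∑ i : Fin n, c (Sum.inr (Sum.inl i)) • g (Sum.inr (Sum.inl i)))
          + c (Sum.inr (Sum.inr ())) • g (Sum.inr (Sum.inr ()))) := by
    rw [Fintype.sum_sum_type]
    congr 1
    rw [Fintype.sum_sum_type]
    congr 1
    exact Fintype.sum_unique _
  rw [hsplit] at hcsum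
  -- first components
  have hfst : ∀ j : Fin n, (α j : ℝ)
      = (∑ e : {e // e ∈ C.edges}, lam e * (if j ∈ e.1 then 1 else 0))
        + c (Sum.inr (Sum.inl j)) := by
    intro j
    have hz : ∑ i : Fin n, c (Sum.inr (Sum.inl i)) * ((Pi.single i 1 : Fin n → ℝ) j)
        = c (Sum.inr (Sum.inl j)) := by
      rw [Finset.sum_eq_single j]
      · simp
      · intro b _ hb
        rw [Pi.single_apply, if_neg (Ne.symm hb), mul_zero]
      · intro hj
        exact absurd (Finset.mem_univ j) hj
    have h1 := congrArg (fun q : (Fin n → ℝ) × ℝ => q.1 j) hcsum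
    simp only [hp, Prod.fst_add, Prod.fst_sum, Prod.smul_fst, Pi.add_apply,
      Finset.sum_apply, Pi.smul_apply, smul_eq_mul, hg1, hg2, hg3] at h1
    rw [h1, hlam]
    simp only [Pi.zero_apply, mul_zero, add_zero, hz]
  -- second components
  have hsnd : (ν : ℝ) = (∑ e : {e // e ∈ C.edges}, lam e) - c (Sum.inr (Sum.inr ())) := by
    have h1 := congrArg Prod.snd hcsum
    simp only [hp, Prod.snd_add, Prod.snd_sum, Prod.smul_snd, smul_eq_mul,
      hg1, hg2, hg3] at h1
    rw [h1]
    simp [hlam]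
    ring
  refine ⟨lam, fun e => hc0 (Sum.inl e), ?_, ?_⟩
  · intro j
    have := hfst j
    have h0 := hc0 (Sum.inr (Sum.inl j))
    linarith
  · have h0 := hc0 (Sum.inr (Sum.inr ()))
    linarith [hsnd]

end Dual

section Greedy
open Finset

theorem greedy {n d : ℕ} (C : Clutter n) (hC : C.Uniform d) (hne : C.edges.Nonempty)
    (hInt : C.QAIntegral)
    (hHil : ∀ a : Fin n → ℤ,
      (∃ lam : {e // e ∈ C.edges} → ℝ, (∀ e, 0 ≤ lam e) ∧
        ∀ i, (a i : ℝ) = ∑ e, lam e * (if i ∈ e.1 then 1 else 0)) →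
      ∃ c : {e // e ∈ C.edges} → ℕ,
        ∀ i, a i = ∑ e, (c e : ℤ) * (if i ∈ e.1 then 1 else 0)) :
    ∀ (N : ℕ) (α : Fin n → ℕ), ∑ i, α i = N →
      ∃ c : {e // e ∈ C.edges} → ℕ,
        (∀ i, ∑ e, c e * (if i ∈ e.1 then 1 else 0) ≤ α i) ∧
        ∑ e, c e = nuInt C α := by
  classical
  intro N
  induction N using Nat.strong_induction_on with
  | _ N ih =>
  intro α hαN
  by_cases hcase : ∃ i, 0 < α i ∧ ∀ S, C.IsCover S → i ∈ S → nuInt C α + 1 ≤ ∑ j ∈ S, α j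
  · obtain ⟨i, hipos, hiS⟩ := hcase
    set α' : Fin n → ℕ := Function.update α i (α i - 1) with hα'
    have hle' : ∀ j, α' j ≤ α j := by
      intro j
      rw [hα']
      by_cases hj : j = i
      · subst hj; rw [Function.update_self]; omega
      · rw [Function.update_of_ne hj]
    have hsum' : ∑ j, α' j + 1 = ∑ j, α j := by
      rw [hα', Finset.sum_update_of_mem (Finset.mem_univ i)]
      rw [← Finset.add_sum_erase _ α (Finset.mem_univ i), Finset.erase_eq]
      omega
    have hcovsum : ∀ S : Finset (Fin n), i ∈ S → ∑ j ∈ S, α' j + 1 = ∑ j ∈ S, α j := by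
      intro S hiS'
      rw [hα', Finset.sum_update_of_mem hiS', ← Finset.add_sum_erase _ α hiS', Finset.erase_eq]
      omega
    have hcovsum' : ∀ S : Finset (Fin n), i ∉ S → ∑ j ∈ S, α' j = ∑ j ∈ S, α j := by
      intro S hiS'
      apply Finset.sum_congr rfl
      intro j hj
      rw [hα', Function.update_of_ne (fun hji => hiS' (by rw [← hji]; exact hj))]
    have hν' : nuInt C α' = nuInt C α := by
      apply le_antisymm
      · obtain ⟨S₀, hS₀cov, hS₀⟩ := nuInt_attained C α
        calc nuInt C α' ≤ ∑ j ∈ S₀, α' j := nuInt_le C α' hS₀cov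
        _ ≤ ∑ j ∈ S₀, α j := Finset.sum_le_sum fun j _ => hle' j
        _ = nuInt C α := hS₀
      · obtain ⟨S₁, hS₁cov, hS₁⟩ := nuInt_attained C α'
        by_cases hiS₁ : i ∈ S₁
        · have h1 := hcovsum S₁ hiS₁
          have h2 := hiS S₁ hS₁cov hiS₁
          omega
        · have h1 := hcovsum' S₁ hiS₁
          have h2 := nuInt_le C α hS₁cov
          omega
    have hN1 : 1 ≤ N := by
      have : α i ≤ ∑ j, α j := Finset.single_le_sum (fun j _ => Nat.zero_le _) (Finset.mem_univ i)
      omega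
    obtain ⟨c, h1, h2⟩ := ih (N - 1) (by omega) α' (by omega)
    exact ⟨c, fun j => le_trans (h1 j) (hle' j), by rw [h2, hν']⟩
  · push_neg at hcase
    by_cases hν0 : nuInt C α = 0
    · refine ⟨fun _ => 0, fun i => by simp, by simp [hν0]⟩
    · set ν : ℕ := nuInt C α with hν
      have hν1 : 1 ≤ ν := Nat.one_le_iff_ne_zero.mpr hν0
      have hlow := lp_lower C hne hInt α ν (fun S hS => nuInt_le C α hS)
      obtain ⟨lam, hlam0, hlamle, hlamtot⟩ := dual_exists C hne hInt α ν hlow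
      have hνR : (0:ℝ) < (ν:ℝ) := by exact_mod_cast hν1
      have hSpos : (0:ℝ) < ∑ e, lam e := lt_of_lt_of_le hνR hlamtot
      set ρ : ℝ := (ν : ℝ) / (∑ e, lam e) with hρ
      have hρpos : 0 < ρ := div_pos hνR hSpos
      have hρle1 : ρ ≤ 1 := (div_le_one hSpos).mpr hlamtot
      set lam' : {e // e ∈ C.edges} → ℝ := fun e => ρ * lam e with hlam'
      have hlam'0 : ∀ e, 0 ≤ lam' e := fun e => mul_nonneg hρpos.le (hlam0 e)
      have hmass' : ∑ e, lam' e = (ν:ℝ) := by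
        rw [hlam']
        rw [← Finset.mul_sum, hρ, div_mul_eq_mul_div]
        exact mul_div_cancel_right₀ _ (ne_of_gt hSpos)
      have hA'le : ∀ j, ∑ e, lam' e * (if j ∈ e.1 then 1 else 0) ≤ (α j : ℝ) := by
        intro j
        have hnn : (0:ℝ) ≤ ∑ e, lam e * (if j ∈ e.1 then 1 else 0) :=
          Finset.sum_nonneg fun e _ => mul_nonneg (hlam0 e) (by split <;> norm_num)
        have : ∑ e, lam' e * (if j ∈ e.1 then 1 else 0)
            = ρ * ∑ e, lam e * (if j ∈ e.1 then 1 else 0) := by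
          rw [Finset.mul_sum]
          apply Finset.sum_congr rfl
          intro e _
          rw [hlam']
          ring
        rw [this]
        calc ρ * ∑ e, lam e * (if j ∈ e.1 then 1 else 0)
            ≤ 1 * ∑ e, lam e * (if j ∈ e.1 then 1 else 0) :=
              mul_le_mul_of_nonneg_right hρle1 hnn
        _ = ∑ e, lam e * (if j ∈ e.1 then 1 else 0) := one_mul _
        _ ≤ (α j : ℝ) := hlamle j
      have hexact : ∀ j, ∑ e, lam' e * (if j ∈ e.1 then 1 else 0) = (α j : ℝ) := by
        intro j
        by_contra hne'
        have hlt : ∑ e, lam' e * (if j ∈ e.1 then 1 else 0) < (α j : ℝ) :=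
          lt_of_le_of_ne (hA'le j) hne'
        by_cases hαj : α j = 0
        · have hnn : (0:ℝ) ≤ ∑ e, lam' e * (if j ∈ e.1 then 1 else 0) :=
            Finset.sum_nonneg fun e _ => mul_nonneg (hlam'0 e) (by split <;> norm_num)
          have hzero : ((α j : ℕ) : ℝ) = 0 := by rw [hαj]; norm_num
          linarith
        · obtain ⟨S, hScov, hjS, hSval⟩ := hcase j (Nat.pos_of_ne_zero hαj)
          have hSν : ∑ k ∈ S, α k ≤ ν := by omega
          -- lower bound for the cover-restricted sum
          have hswap : ∑ k ∈ S, ∑ e : {e // e ∈ C.edges}, lam' e * (if k ∈ e.1 then 1 else 0)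
              = ∑ e : {e // e ∈ C.edges}, lam' e * ((e.1 ∩ S).card : ℝ) := by
            rw [Finset.sum_comm]
            apply Finset.sum_congr rfl
            intro e _
            rw [← Finset.mul_sum]
            congr 1
            rw [Finset.sum_ite_mem]
            rw [Finset.sum_const, nsmul_eq_mul, mul_one, Finset.inter_comm]
          have hcard1 : ∀ e : {e // e ∈ C.edges}, (1:ℝ) ≤ ((e.1 ∩ S).card : ℝ) := by
            intro e
            have := hScov e.1 e.2
            have hcp : 1 ≤ (e.1 ∩ S).card := Finset.card_pos.mpr this
            exact_mod_cast hcp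
          have hlb : (ν:ℝ) ≤ ∑ k ∈ S, ∑ e : {e // e ∈ C.edges}, lam' e * (if k ∈ e.1 then 1 else 0) := by
            rw [hswap, ← hmass']
            apply Finset.sum_le_sum
            intro e _
            nlinarith [hlam'0 e, hcard1 e]
          have hub : ∑ k ∈ S, ∑ e : {e // e ∈ C.edges}, lam' e * (if k ∈ e.1 then 1 else 0)
              < ∑ k ∈ S, (α k : ℝ) := by
            apply Finset.sum_lt_sum (fun k _ => hA'le k) ⟨j, hjS, hlt⟩
          have hup : ∑ k ∈ S, (α k : ℝ) ≤ (ν : ℝ) := by exact_mod_cast hSν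
          linarith
      -- apply the Hilbert basis hypothesis
      obtain ⟨c, hc⟩ := hHil (fun i => (α i : ℤ))
        ⟨lam', hlam'0, fun i => by
          push_cast
          exact (hexact i).symm⟩
      have hAc : ∀ i, ∑ e, c e * (if i ∈ e.1 then 1 else 0) = α i := by
        intro i
        have hci := hc i
        have : ((∑ e, c e * (if i ∈ e.1 then 1 else 0) : ℕ) : ℤ) = ((α i : ℕ) : ℤ) := by
          push_cast
          rw [← hci]
        exact_mod_cast this
      obtain ⟨e₀, he₀⟩ := hne
      have hd1 : 1 ≤ d := by
        rw [← hC e₀ he₀]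
        exact Finset.card_pos.mpr (C.nonempty_edges e₀ he₀)
      have hmassc : ∑ e, c e = ν := by
        have hcompute1 : ∑ i, (α i : ℝ) = (d:ℝ) * (ν:ℝ) := by
          calc ∑ i, (α i : ℝ)
              = ∑ i, (1:ℝ) * ∑ e : {e // e ∈ C.edges}, lam' e * (if i ∈ e.1 then 1 else 0) := by
                apply Finset.sum_congr rfl
                intro i _
                rw [one_mul, hexact i]
          _ = ∑ e : {e // e ∈ C.edges}, lam' e * ∑ i ∈ e.1, (1:ℝ) := inner_swap' C (fun _ => 1) lam'
          _ = ∑ e : {e // e ∈ C.edges}, lam' e * d := by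
                apply Finset.sum_congr rfl
                intro e _
                rw [Finset.sum_const, nsmul_eq_mul, mul_one, hC e.1 e.2]
          _ = (d:ℝ) * (ν:ℝ) := by rw [← hmass', ← Finset.sum_mul]; ring
        have hcompute2 : ∑ i, (α i : ℝ) = (d:ℝ) * ((∑ e, c e : ℕ) : ℝ) := by
          calc ∑ i, (α i : ℝ)
              = ∑ i, (1:ℝ) * ∑ e : {e // e ∈ C.edges}, ((c e : ℕ):ℝ) * (if i ∈ e.1 then 1 else 0) := by
                apply Finset.sum_congr rfl
                intro i _
                rw [one_mul]
                have := hAc i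
                have hcast : ((∑ e, c e * (if i ∈ e.1 then 1 else 0) : ℕ) : ℝ) = ((α i:ℕ):ℝ) := by
                  exact_mod_cast congrArg (Nat.cast : ℕ → ℝ) this
                rw [← hcast]
                push_cast
                apply Finset.sum_congr rfl
                intro e _
                split <;> simp
          _ = ∑ e : {e // e ∈ C.edges}, ((c e :ℕ):ℝ) * ∑ i ∈ e.1, (1:ℝ) :=
                inner_swap' C (fun _ => 1) (fun e => ((c e:ℕ):ℝ))
          _ = ∑ e : {e // e ∈ C.edges}, ((c e :ℕ):ℝ) * d := by
                apply Finset.sum_congr rfl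
                intro e _
                rw [Finset.sum_const, nsmul_eq_mul, mul_one, hC e.1 e.2]
          _ = (d:ℝ) * ((∑ e, c e : ℕ) : ℝ) := by
                push_cast
                rw [← Finset.sum_mul]
                ring
        have hdnz : (d:ℝ) ≠ 0 := by
          have : (0:ℝ) < (d:ℝ) := by exact_mod_cast hd1
          linarith
        have : ((∑ e, c e : ℕ) : ℝ) = (ν:ℝ) :=
          mul_left_cancel₀ hdnz (hcompute2 ▸ hcompute1)
        exact_mod_cast this
      exact ⟨c, fun i => le_of_eq (hAc i), hmassc⟩

end Greedy

section Assemble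
open Finset

theorem mfmc_of {n d : ℕ} (C : Clutter n) (hC : C.Uniform d) (hInt : C.QAIntegral)
    (hHil : ∀ a : Fin n → ℤ,
      (∃ lam : {e // e ∈ C.edges} → ℝ, (∀ e, 0 ≤ lam e) ∧
        ∀ i, (a i : ℝ) = ∑ e, lam e * (if i ∈ e.1 then 1 else 0)) →
      ∃ c : {e // e ∈ C.edges} → ℕ,
        ∀ i, a i = ∑ e, (c e : ℤ) * (if i ∈ e.1 then 1 else 0)) :
    C.HasMFMC := by
  classical
  intro α
  by_cases hne : C.edges.Nonempty
  · obtain ⟨c, hAc, hcsum⟩ := greedy C hC hne hInt hHil (∑ i, α i) α rfl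
    obtain ⟨S₀, hS₀cov, hS₀val⟩ := nuInt_attained C α
    refine ⟨fun i => if i ∈ S₀ then 1 else 0,
      fun e => if h : e ∈ C.edges then c ⟨e, h⟩ else 0, ?_, ?_, ?_, ?_⟩
    · intro e he
      obtain ⟨j, hj⟩ := hS₀cov e he
      rw [Finset.mem_inter] at hj
      calc 1 = (if j ∈ S₀ then 1 else 0) := by rw [if_pos hj.2]
      _ ≤ ∑ i ∈ e, (if i ∈ S₀ then 1 else 0) :=
          Finset.single_le_sum (f := fun i => if i ∈ S₀ then (1:ℕ) else 0)
            (fun i _ => Nat.zero_le _) hj.1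
    · intro e he
      exact dif_neg he
    · intro i
      have h1 := filter_sum_subtype C (fun e => i ∈ e)
        (fun e => if h : e ∈ C.edges then c ⟨e, h⟩ else 0)
      have h2 : ∑ e : {e // e ∈ C.edges},
          (if i ∈ e.1 then (if h : (e.1 : Finset (Fin n)) ∈ C.edges then c ⟨e.1, h⟩ else 0) else 0)
          = ∑ e : {e // e ∈ C.edges}, c e * (if i ∈ e.1 then 1 else 0) := by
        apply Finset.sum_congr rfl
        intro e _
        rw [dif_pos e.2, Subtype.coe_eta]
        split <;> simp
      calc ∑ e ∈ C.edges.filter (fun e => i ∈ e),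
            (if h : e ∈ C.edges then c ⟨e, h⟩ else 0) = _ := h1
      _ = ∑ e : {e // e ∈ C.edges}, c e * (if i ∈ e.1 then 1 else 0) := h2
      _ ≤ α i := hAc i
    · have hL : ∑ i, α i * (if i ∈ S₀ then 1 else 0) = ∑ i ∈ S₀, α i := by
        simp_rw [mul_ite, mul_one, mul_zero]
        rw [← Finset.sum_filter]
        congr 1
        ext i; simp
      have hR : ∑ e ∈ C.edges, (if h : e ∈ C.edges then c ⟨e, h⟩ else 0)
          = ∑ e : {e // e ∈ C.edges}, c e := by
        rw [← Finset.sum_coe_sort C.edges (fun e => if h : e ∈ C.edges then c ⟨e, h⟩ else 0)]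
        apply Finset.sum_congr rfl
        intro e _
        rw [dif_pos e.2, Subtype.coe_eta]
      rw [hL, hR, hcsum, hS₀val]
  · refine ⟨fun _ => 0, fun _ => 0, ?_, fun _ _ => rfl, ?_, ?_⟩
    · intro e he
      exact absurd ⟨e, he⟩ hne
    · intro i
      simp
    · simp
end Assemble


/-- A uniform clutter `C` has the max-flow min-cut property if and only
if `Q(A)` is an integral polyhedron and `{v_1,…,v_q}` is a Hilbert basis, i.e.
`ℕ{v_1,…,v_q} = ℝ₊{v_1,…,v_q} ∩ ℤⁿ`. -/
theorem stmt8 {n d : ℕ} (C : Clutter n) (hC : C.Uniform d) :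
    C.HasMFMC ↔
      (C.QAIntegral ∧
        ∀ a : Fin n → ℤ,
          (∃ lam : {e // e ∈ C.edges} → ℝ, (∀ e, 0 ≤ lam e) ∧
            ∀ i, (a i : ℝ) = ∑ e, lam e * (if i ∈ e.1 then 1 else 0)) →
          ∃ c : {e // e ∈ C.edges} → ℕ,
            ∀ i, a i = ∑ e, (c e : ℤ) * (if i ∈ e.1 then 1 else 0)) := by
  constructor
  · intro hM
    exact ⟨qaintegral_of_mfmc C hM, fun a h => hilbert_of_mfmc C hC hM a h⟩
  · rintro ⟨hInt, hHil⟩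
    exact mfmc_of C hC hInt hHil
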